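/- For every a > 0 and every integer n ≥ 1, the operator (R_{a^c} + T_{a^c})ⁿ R_a is a compact operator on L²(π). -/

import Mathlib

open MeasureTheory Filter Topology
open BoundedContinuousFunction
open scoped ENNReal NNReal

noncomputable section

/-- The probability measure on `ℝ` with density `π` w.r.t. Lebesgue measure. -/
def piMeas (π : ℝ → ℝ) : Measure ℝ := volume.withDensity fun x => ENNReal.ofReal (π x)

/-- `t(x,y) = min(q(x,y), π(y) q(y,x) / π(x))`. -/
def mhT (π : ℝ → ℝ) (q : ℝ → ℝ → ℝ) (x y : ℝ) : ℝ := min (q x y) (π y * q y x / π x)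

/-- The rejection probability `r(x) = 1 - ∫ t(x,y) dy`. -/
def mhR (π : ℝ → ℝ) (q : ℝ → ℝ → ℝ) (x : ℝ) : ℝ := 1 - ∫ y, mhT π q x y

/-- By continuity, the finite-range assumption extends to `s ≤ |y - x|`. -/
lemma aux_q_zero (q : ℝ → ℝ → ℝ)
    (hqcont : Continuous fun p : ℝ × ℝ => q p.1 p.2)
    (s : ℝ) (hs : 0 < s) (hrange : ∀ x u : ℝ, s < |u| → q x (x + u) = 0) :
    ∀ x y : ℝ, s ≤ |y - x| → q x y = 0 := by
  intro x y h
  rcases eq_or_lt_of_le h with h | h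
  · -- boundary case: use continuity along the ray
    set g : ℝ → ℝ := fun c => q x (x + c * (y - x)) with hg
    have hgc : Continuous g := by
      have : g = (fun p : ℝ × ℝ => q p.1 p.2) ∘ fun c => (x, x + c * (y - x)) := rfl
      rw [this]
      exact hqcont.comp (by continuity)
    have hg0 : ∀ c ∈ Set.Ioi (1 : ℝ), g c = 0 := by
      intro c hc
      apply hrange
      rw [abs_mul]
      calc s = 1 * |y - x| := by rw [one_mul, h]
        _ < |c| * |y - x| := by
            apply mul_lt_mul_of_pos_right _ (by rw [← h]; exact hs)
            have : (1:ℝ) < c := hc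
            rw [abs_of_pos (lt_trans one_pos this)]; exact this
    have h1 : Tendsto g (nhdsWithin 1 (Set.Ioi 1)) (nhds (g 1)) :=
      (hgc.tendsto 1).mono_left nhdsWithin_le_nhds
    have h2 : Tendsto g (nhdsWithin 1 (Set.Ioi 1)) (nhds 0) := by
      apply Tendsto.congr' _ tendsto_const_nhds
      filter_upwards [self_mem_nhdsWithin] with c hc
      exact (hg0 c hc).symm
    have : g 1 = 0 := tendsto_nhds_unique h1 h2
    simpa [hg, one_mul, add_sub_cancel] using this
  · have := hrange x (y - x) h
    simpa [add_sub_cancel] using this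

theorem RacTac_pow_Ra_compact
    (π : ℝ → ℝ) (hπpos : ∀ x, 0 < π x) (hπcont : Continuous π)
    (hπprob : ∫ x, π x = 1)
    (q : ℝ → ℝ → ℝ) (hqnn : ∀ x y, 0 ≤ q x y) (hqbdd : ∃ M, ∀ x y, q x y ≤ M)
    (hqcont : Continuous fun p : ℝ × ℝ => q p.1 p.2) (hqprob : ∀ x, ∫ y, q x y = 1)
    (s : ℝ) (hs : 0 < s) (hrange : ∀ x u : ℝ, s < |u| → q x (x + u) = 0)
    (a : ℝ) (ha : 0 < a)
    (Ra Rac Tac : Lp ℂ 2 (piMeas π) →L[ℂ] Lp ℂ 2 (piMeas π))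
    (hRa : ∀ f : Lp ℂ 2 (piMeas π),
      ⇑(Ra f) =ᵐ[piMeas π] fun x => if |x| ≤ a then (mhR π q x : ℂ) * f x else 0)
    (hRac : ∀ f : Lp ℂ 2 (piMeas π),
      ⇑(Rac f) =ᵐ[piMeas π] fun x => if a < |x| then (mhR π q x : ℂ) * f x else 0)
    (hTac : ∀ f : Lp ℂ 2 (piMeas π),
      ⇑(Tac f) =ᵐ[piMeas π]
        fun x => if a < |x| then (∫ y, (mhT π q x y : ℂ) * f y) else 0)
    (n : ℕ) (hn : 1 ≤ n) :
    IsCompactOperator ⇑(((Rac + Tac) ^ n).comp Ra) := by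
  classical
  -- ## Basic measure-theoretic facts
  have hπint : Integrable π volume := by
    by_contra h
    rw [integral_undef h] at hπprob; norm_num at hπprob
  have hπmeas : Measurable fun x => ENNReal.ofReal (π x) :=
    ENNReal.measurable_ofReal.comp hπcont.measurable
  have hμuniv : piMeas π Set.univ = 1 := by
    rw [piMeas, withDensity_apply _ MeasurableSet.univ, Measure.restrict_univ,
      ← ofReal_integral_eq_lintegral_ofReal hπint
        (Filter.Eventually.of_forall fun x => (hπpos x).le), hπprob]
    simp
  haveI : IsProbabilityMeasure (piMeas π) := ⟨hμuniv⟩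
  have hac : (volume : Measure ℝ) ≪ piMeas π := by
    apply withDensity_absolutelyContinuous' hπmeas.aemeasurable
    filter_upwards with x
    simp [ENNReal.ofReal_eq_zero, not_le, hπpos x]
  -- ## Constants
  obtain ⟨M, hM⟩ := hqbdd
  have hM0 : 0 ≤ M := le_trans (hqnn 0 0) (hM 0 0)
  have hIccne : (Set.Icc (-a) a).Nonempty := ⟨0, by constructor <;> linarith⟩
  obtain ⟨y₀, hy₀, hminon⟩ := isCompact_Icc.exists_isMinOn hIccne hπcont.continuousOn
  set m := π y₀ with hmdef
  have hm0 : 0 < m := hπpos y₀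
  have hmle : ∀ y ∈ Set.Icc (-a) a, m ≤ π y := fun y hy => hminon hy
  have hm' : m ≠ 0 := hm0.ne'
  have harith : ∀ ε c : ℝ, 0 < c → ε * m / (2 * c) / m * c = ε / 2 := by
    intro ε c hc
    field_simp
  -- ## Facts about the kernel t
  have htnn : ∀ x y, 0 ≤ mhT π q x y := fun x y =>
    le_min (hqnn x y) (div_nonneg (mul_nonneg (hπpos y).le (hqnn y x)) (hπpos x).le)
  have htle : ∀ x y, mhT π q x y ≤ q x y := fun x y => min_le_left _ _
  have htM : ∀ x y, mhT π q x y ≤ M := fun x y => le_trans (htle x y) (hM x y)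
  have hq0 := aux_q_zero q hqcont s hs hrange
  have ht0 : ∀ x y, s ≤ |y - x| → mhT π q x y = 0 := by
    intro x y h
    have h1 := hq0 x y h
    have h2 : q y x = 0 := hq0 y x (by rwa [abs_sub_comm])
    simp [mhT, h1, h2]
  have htcont : Continuous fun p : ℝ × ℝ => mhT π q p.1 p.2 := by
    apply hqcont.min
    exact ((hπcont.comp continuous_snd).mul
      (hqcont.comp (continuous_snd.prodMk continuous_fst))).div
      (hπcont.comp continuous_fst) fun p => (hπpos p.1).ne'
  -- ## The integral-kernel map F
  set F : (ℝ → ℂ) → ℝ → ℂ := fun g x => ∫ y, (mhT π q x y : ℂ) * g y with hFdef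
  -- pointwise a.e. domination estimate
  have hdom : ∀ (g : ℝ → ℂ), (∀ᵐ y ∂(volume : Measure ℝ), y ∉ Set.Icc (-a) a → g y = 0) →
      ∀ (φ : ℝ → ℝ) (ε : ℝ), 0 ≤ ε → (∀ y ∈ Set.Icc (-a) a, |φ y| ≤ ε) →
      (∀ᵐ y ∂(volume : Measure ℝ), ‖(φ y : ℂ) * g y‖ ≤ ε / m * (‖g y‖ * π y)) := by
    intro g hsuppg φ ε hε hφ
    filter_upwards [hsuppg] with y hy
    by_cases hyI : y ∈ Set.Icc (-a) a
    · rw [norm_mul, Complex.norm_real, Real.norm_eq_abs]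
      have h1 : |φ y| ≤ ε := hφ y hyI
      have h2 : m ≤ π y := hmle y hyI
      have h3 : (0:ℝ) ≤ ‖g y‖ := norm_nonneg _
      have h4 : (0:ℝ) ≤ ε / m := div_nonneg hε hm0.le
      have h5 : ε / m * m = ε := by field_simp
      nlinarith [mul_le_mul_of_nonneg_right h1 h3, mul_le_mul_of_nonneg_left h2 h4,
        abs_nonneg (φ y)]
    · rw [hy hyI]
      simp
  -- integrability of kernel integrands
  have hI1 : ∀ (g : ℝ → ℂ), (∀ᵐ y ∂(volume : Measure ℝ), y ∉ Set.Icc (-a) a → g y = 0) →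
      AEStronglyMeasurable g volume → Integrable (fun y => ‖g y‖ * π y) volume →
      ∀ x, Integrable (fun y => (mhT π q x y : ℂ) * g y) volume := by
    intro g hsuppg hgmeas hint x
    have hcx : Continuous fun y => mhT π q x y :=
      htcont.comp (continuous_const.prodMk continuous_id)
    refine Integrable.mono' (hint.const_mul (M / m))
      ((Complex.continuous_ofReal.comp hcx).aestronglyMeasurable.mul hgmeas) ?_
    have := hdom g hsuppg (fun y => mhT π q x y) M hM0
      (fun y hy => by rw [abs_of_nonneg (htnn x y)]; exact htM x y)
    filter_upwards [this] with y hy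
    exact hy
  -- integral bound
  have hkey : ∀ (g : ℝ → ℂ), (∀ᵐ y ∂(volume : Measure ℝ), y ∉ Set.Icc (-a) a → g y = 0) →
      Integrable (fun y => ‖g y‖ * π y) volume →
      ∀ (φ : ℝ → ℝ) (ε : ℝ), 0 ≤ ε → (∀ y ∈ Set.Icc (-a) a, |φ y| ≤ ε) →
      ∫ y, ‖(φ y : ℂ) * g y‖ ≤ ε / m * ∫ y, ‖g y‖ * π y := by
    intro g hsuppg hint φ ε hε hφ
    calc ∫ y, ‖(φ y : ℂ) * g y‖ ≤ ∫ y, ε / m * (‖g y‖ * π y) :=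
          integral_mono_of_nonneg (Filter.Eventually.of_forall fun y => norm_nonneg _)
            (hint.const_mul _) (hdom g hsuppg φ ε hε hφ)
      _ = ε / m * ∫ y, ‖g y‖ * π y := integral_const_mul _ _
  -- bound on F
  have hFbnd : ∀ (g : ℝ → ℂ), (∀ᵐ y ∂(volume : Measure ℝ), y ∉ Set.Icc (-a) a → g y = 0) →
      Integrable (fun y => ‖g y‖ * π y) volume →
      ∀ x, ‖F g x‖ ≤ M / m * ∫ y, ‖g y‖ * π y := by
    intro g hsuppg hint x
    refine le_trans (norm_integral_le_integral_norm _) ?_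
    exact hkey g hsuppg hint (fun y => mhT π q x y) M hM0
      (fun y hy => by rw [abs_of_nonneg (htnn x y)]; exact htM x y)
  -- difference bound on F
  have hFsub : ∀ (g : ℝ → ℂ), (∀ᵐ y ∂(volume : Measure ℝ), y ∉ Set.Icc (-a) a → g y = 0) →
      AEStronglyMeasurable g volume → Integrable (fun y => ‖g y‖ * π y) volume →
      ∀ (x x' : ℝ) (ε : ℝ), 0 ≤ ε → (∀ y ∈ Set.Icc (-a) a, |mhT π q x y - mhT π q x' y| ≤ ε) →
      ‖F g x - F g x'‖ ≤ ε / m * ∫ y, ‖g y‖ * π y := by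
    intro g hsuppg hgmeas hint x x' ε hε hφ
    have hsub : F g x - F g x' = ∫ y, ((mhT π q x y - mhT π q x' y : ℝ) : ℂ) * g y := by
      rw [show F g x = ∫ y, (mhT π q x y : ℂ) * g y from rfl,
        show F g x' = ∫ y, (mhT π q x' y : ℂ) * g y from rfl,
        ← integral_sub (hI1 g hsuppg hgmeas hint x) (hI1 g hsuppg hgmeas hint x')]
      apply integral_congr_ae
      filter_upwards with y
      push_cast
      ring
    rw [hsub]
    refine le_trans (norm_integral_le_integral_norm _) ?_
    exact hkey g hsuppg hint _ ε hε hφ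
  -- F vanishes far away
  have hF0 : ∀ (g : ℝ → ℂ), (∀ᵐ y ∂(volume : Measure ℝ), y ∉ Set.Icc (-a) a → g y = 0) →
      ∀ x : ℝ, a + s ≤ |x| → F g x = 0 := by
    intro g hsuppg x hx
    rw [show F g x = ∫ y, (mhT π q x y : ℂ) * g y from rfl]
    apply integral_eq_zero_of_ae
    filter_upwards [hsuppg] with y hy
    by_cases hyI : y ∈ Set.Icc (-a) a
    · have hya : |y| ≤ a := abs_le.mpr (Set.mem_Icc.mp hyI)
      have hsx : s ≤ |y - x| := by
        have h1 : |x| - |y| ≤ |x - y| := abs_sub_abs_le_abs_sub x y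
        rw [abs_sub_comm] at h1
        linarith
      simp [ht0 x y hsx]
    · simp [hy hyI]
  -- uniform continuity of the kernel
  have keyUC : ∀ x₀ : ℝ, ∀ ε > (0:ℝ), ∃ δ > (0:ℝ), ∀ x : ℝ, |x - x₀| < δ →
      ∀ y ∈ Set.Icc (-a) a, |mhT π q x y - mhT π q x₀ y| ≤ ε := by
    intro x₀ ε hε
    have hcpt : IsCompact (Set.Icc (x₀ - 1) (x₀ + 1) ×ˢ Set.Icc (-a) a) :=
      isCompact_Icc.prod isCompact_Icc
    have huc := hcpt.uniformContinuousOn_of_continuous htcont.continuousOn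
    rw [Metric.uniformContinuousOn_iff] at huc
    obtain ⟨δ, hδ0, hδ⟩ := huc ε hε
    refine ⟨min δ 1, lt_min hδ0 one_pos, fun x hx y hy => ?_⟩
    have hx1 : |x - x₀| < 1 := lt_of_lt_of_le hx (min_le_right _ _)
    have hxδ : |x - x₀| < δ := lt_of_lt_of_le hx (min_le_left _ _)
    have hxm : x ∈ Set.Icc (x₀ - 1) (x₀ + 1) := by
      rw [Set.mem_Icc]; rw [abs_lt] at hx1; constructor <;> linarith
    have hx₀m : x₀ ∈ Set.Icc (x₀ - 1) (x₀ + 1) := by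
      rw [Set.mem_Icc]; constructor <;> linarith
    have hd := hδ (x, y) ⟨hxm, hy⟩ (x₀, y) ⟨hx₀m, hy⟩ (by
      rw [Prod.dist_eq]
      apply max_lt
      · rwa [Real.dist_eq]
      · rw [dist_self]; exact hδ0)
    rw [Real.dist_eq] at hd
    exact hd.le
  -- ## Facts about g := Ra f
  have hsupp : ∀ f : Lp ℂ 2 (piMeas π),
      ∀ᵐ y ∂(volume : Measure ℝ), y ∉ Set.Icc (-a) a → (Ra f) y = 0 := by
    intro f
    have h1 : ∀ᵐ y ∂(piMeas π), y ∉ Set.Icc (-a) a → (Ra f) y = 0 := by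
      filter_upwards [hRa f] with y hy hyn
      rw [hy, if_neg]
      intro hcon
      exact hyn (Set.mem_Icc.mpr (abs_le.mp hcon))
    exact hac.ae_le h1
  have hmeasg : ∀ f : Lp ℂ 2 (piMeas π), AEStronglyMeasurable (⇑(Ra f)) volume := fun f =>
    (Lp.aestronglyMeasurable (Ra f)).mono_ac hac
  have hπg : ∀ f : Lp ℂ 2 (piMeas π),
      Integrable (fun y => ‖(Ra f) y‖ * π y) volume := by
    intro f
    have h1 : Integrable (fun y => ‖(Ra f) y‖) (piMeas π) :=
      ((Lp.memLp (Ra f)).integrable one_le_two).norm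
    have h2 := (integrable_withDensity_iff hπmeas
      (Filter.Eventually.of_forall fun x => ENNReal.ofReal_lt_top)).mp h1
    exact h2.congr (Filter.Eventually.of_forall fun y => by
      simp [ENNReal.toReal_ofReal (hπpos y).le])
  have hCgf : ∀ f : Lp ℂ 2 (piMeas π), ∫ y, ‖(Ra f) y‖ * π y ≤ ‖Ra f‖ := by
    intro f
    have heq0 : ∫ y, ‖(Ra f) y‖ ∂(volume.withDensity (fun y => ((π y).toNNReal : ℝ≥0∞)))
        = ∫ y, ‖(Ra f) y‖ * π y := by
      rw [integral_withDensity_eq_integral_smul hπcont.measurable.real_toNNReal]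
      apply integral_congr_ae
      filter_upwards with y
      simp [NNReal.smul_def, Real.coe_toNNReal _ (hπpos y).le, mul_comm]
    have heq : ∫ y, ‖(Ra f) y‖ ∂(piMeas π) = ∫ y, ‖(Ra f) y‖ * π y := heq0
    have h3 : ∫ y, ‖(Ra f) y‖ ∂(piMeas π) = (eLpNorm (⇑(Ra f)) 1 (piMeas π)).toReal := by
      rw [eLpNorm_one_eq_lintegral_enorm,
        integral_norm_eq_lintegral_enorm (Lp.aestronglyMeasurable (Ra f))]
    rw [← heq, h3, Lp.norm_def]
    exact ENNReal.toReal_mono (Lp.eLpNorm_ne_top (Ra f))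
      (eLpNorm_le_eLpNorm_of_exponent_le one_le_two (Lp.aestronglyMeasurable (Ra f)))
  have hgnorm : ∀ f : Lp ℂ 2 (piMeas π), ‖f‖ ≤ 1 → ∫ y, ‖(Ra f) y‖ * π y ≤ ‖Ra‖ := by
    intro f hf
    refine le_trans (hCgf f) ?_
    calc ‖Ra f‖ ≤ ‖Ra‖ * ‖f‖ := Ra.le_opNorm f
      _ ≤ ‖Ra‖ * 1 := by
          exact mul_le_mul_of_nonneg_left hf (norm_nonneg _)
      _ = ‖Ra‖ := mul_one _
  -- continuity of F (Ra f)
  have hFcont : ∀ f : Lp ℂ 2 (piMeas π), Continuous fun x => F (⇑(Ra f)) x := by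
    intro f
    rw [Metric.continuous_iff]
    intro x₀ ε hε
    set D : ℝ := (∫ y, ‖(Ra f) y‖ * π y) + 1 with hDdef
    have hint_nn : 0 ≤ ∫ y, ‖(Ra f) y‖ * π y :=
      integral_nonneg fun y => mul_nonneg (norm_nonneg _) (hπpos y).le
    have hD0 : 0 < D := by rw [hDdef]; linarith
    have hε' : 0 < ε * m / (2 * D) := div_pos (mul_pos hε hm0) (by linarith)
    obtain ⟨δ, hδ0, hδ⟩ := keyUC x₀ _ hε'
    refine ⟨δ, hδ0, fun x hx => ?_⟩
    rw [Real.dist_eq] at hx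
    rw [dist_eq_norm]
    calc ‖F (⇑(Ra f)) x - F (⇑(Ra f)) x₀‖
        ≤ ε * m / (2 * D) / m * ∫ y, ‖(Ra f) y‖ * π y :=
          hFsub _ (hsupp f) (hmeasg f) (hπg f) x x₀ _ hε'.le (hδ x hx)
      _ ≤ ε * m / (2 * D) / m * D := by
          apply mul_le_mul_of_nonneg_left _ (div_pos hε' hm0).le
          rw [hDdef]; linarith
      _ = ε / 2 := by field_simp
      _ < ε := by linarith
  -- ## The compact set via Arzelà–Ascoli
  set B : ℝ := a + s with hBdef
  have hB0 : 0 < B := by rw [hBdef]; linarith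
  have hBle : -B ≤ B := by linarith
  set A : Set (Set.Icc (-B) B →ᵇ ℂ) :=
    {h | ∃ f : Lp ℂ 2 (piMeas π), ‖f‖ ≤ 1 ∧ ∀ x : Set.Icc (-B) B, h x = F (⇑(Ra f)) x.val}
    with hAdef
  have hin_s : ∀ (h : Set.Icc (-B) B →ᵇ ℂ) (x : Set.Icc (-B) B), h ∈ A →
      h x ∈ Metric.closedBall (0:ℂ) (M / m * ‖Ra‖) := by
    rintro h x ⟨f, hf1, hfx⟩
    rw [Metric.mem_closedBall, dist_zero_right, hfx x]
    calc ‖F (⇑(Ra f)) x.val‖ ≤ M / m * ∫ y, ‖(Ra f) y‖ * π y :=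
          hFbnd _ (hsupp f) (hπg f) _
      _ ≤ M / m * ‖Ra‖ :=
          mul_le_mul_of_nonneg_left (hgnorm f hf1) (div_nonneg hM0 hm0.le)
  have hequi : Equicontinuous ((↑) : A → Set.Icc (-B) B → ℂ) := by
    intro x₀
    rw [Metric.equicontinuousAt_iff]
    intro ε hε
    have hCR1 : (0:ℝ) < ‖Ra‖ + 1 := by linarith [norm_nonneg Ra]
    have hε' : 0 < ε * m / (2 * (‖Ra‖ + 1)) := div_pos (mul_pos hε hm0) (by linarith)
    obtain ⟨δ, hδ0, hδ⟩ := keyUC x₀.val _ hε'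
    refine ⟨δ, hδ0, fun x hx i => ?_⟩
    obtain ⟨h, f, hf1, hfx⟩ := i
    show dist (h x₀) (h x) < ε
    rw [dist_eq_norm, hfx x₀, hfx x]
    have hx' : |x.val - x₀.val| < δ := by
      rw [Subtype.dist_eq, Real.dist_eq] at hx
      exact hx
    have hIb : ∫ y, ‖(Ra f) y‖ * π y ≤ ‖Ra‖ + 1 :=
      le_trans (hgnorm f hf1) (by linarith)
    calc ‖F (⇑(Ra f)) x₀.val - F (⇑(Ra f)) x.val‖
        ≤ ε * m / (2 * (‖Ra‖ + 1)) / m * ∫ y, ‖(Ra f) y‖ * π y :=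
          hFsub _ (hsupp f) (hmeasg f) (hπg f) x₀.val x.val _ hε'.le
            (fun y hy => by rw [abs_sub_comm]; exact hδ x.val hx' y hy)
      _ ≤ ε * m / (2 * (‖Ra‖ + 1)) / m * (‖Ra‖ + 1) := by
          apply mul_le_mul_of_nonneg_left hIb (div_pos hε' hm0).le
      _ = ε / 2 := harith ε _ hCR1
      _ < ε := by linarith
  have hAA : IsCompact (closure A) :=
    BoundedContinuousFunction.arzela_ascoli (Metric.closedBall (0:ℂ) (M / m * ‖Ra‖))
      (isCompact_closedBall _ _) A hin_s hequi
  -- ## The continuous map J : BCF → Lp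
  set S : Set ℝ := (fun x => |x|) ⁻¹' Set.Ioc a B with hSdef
  have hSmeas : MeasurableSet S := continuous_abs.measurable measurableSet_Ioc
  set E : (Set.Icc (-B) B →ᵇ ℂ) → ℝ → ℂ :=
    fun h => S.indicator (fun x => h (Set.projIcc (-B) B hBle x)) with hEdef
  have hEmeas : ∀ h, AEStronglyMeasurable (E h) (piMeas π) := fun h =>
    ((h.continuous.comp continuous_projIcc).aestronglyMeasurable).indicator hSmeas
  have hEbd : ∀ h x, ‖E h x‖ ≤ ‖h‖ := by
    intro h x
    by_cases hx : x ∈ S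
    · have he : E h x = h (Set.projIcc (-B) B hBle x) := Set.indicator_of_mem hx _
      rw [he]
      exact BoundedContinuousFunction.norm_coe_le_norm h _
    · have he : E h x = 0 := Set.indicator_of_notMem hx _
      rw [he]
      simp
  have hEmem : ∀ h, MemLp (E h) 2 (piMeas π) := fun h =>
    MemLp.of_bound (hEmeas h) ‖h‖ (Filter.Eventually.of_forall (hEbd h))
  set J : (Set.Icc (-B) B →ᵇ ℂ) → Lp ℂ 2 (piMeas π) :=
    fun h => (hEmem h).toLp (E h) with hJdef
  have hJlip : LipschitzWith 1 J := by
    apply LipschitzWith.of_dist_le_mul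
    intro h h'
    rw [NNReal.coe_one, one_mul, dist_eq_norm]
    have hsub : J h - J h' = ((hEmem h).sub (hEmem h')).toLp (E h - E h') :=
      MemLp.toLp_sub (hEmem h) (hEmem h')
    rw [hsub, Lp.norm_toLp]
    have hb : ∀ᵐ x ∂(piMeas π), ‖(E h - E h') x‖ ≤ dist h h' := by
      filter_upwards with x
      have hpt : (E h - E h') x = E h x - E h' x := rfl
      rw [hpt]
      by_cases hx : x ∈ S
      · have he1 : E h x = h (Set.projIcc (-B) B hBle x) := Set.indicator_of_mem hx _
        have he2 : E h' x = h' (Set.projIcc (-B) B hBle x) := Set.indicator_of_mem hx _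
        rw [he1, he2, ← dist_eq_norm]
        exact BoundedContinuousFunction.dist_coe_le_dist _
      · have he1 : E h x = 0 := Set.indicator_of_notMem hx _
        have he2 : E h' x = 0 := Set.indicator_of_notMem hx _
        rw [he1, he2, sub_zero, norm_zero]
        exact dist_nonneg
    have hle : eLpNorm (E h - E h') 2 (piMeas π) ≤ ENNReal.ofReal (dist h h') := by
      refine le_trans (eLpNorm_le_of_ae_bound hb) ?_
      rw [hμuniv, ENNReal.one_rpow, one_mul]
    exact ENNReal.toReal_le_of_le_ofReal dist_nonneg hle
  have hJeq : ∀ f : Lp ℂ 2 (piMeas π), ∀ h : Set.Icc (-B) B →ᵇ ℂ,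
      (∀ x : Set.Icc (-B) B, h x = F (⇑(Ra f)) x.val) → J h = Tac (Ra f) := by
    intro f h hfx
    apply Lp.ext (μ := piMeas π)
    have h1 : ⇑(J h) =ᵐ[piMeas π] E h := MemLp.coeFn_toLp _
    have h2 := hTac (Ra f)
    refine h1.trans (EventuallyEq.trans (Filter.Eventually.of_forall ?_) h2.symm)
    intro x
    by_cases hx : x ∈ S
    · have hx' : a < |x| ∧ |x| ≤ B := hx
      have hxmem : x ∈ Set.Icc (-B) B := Set.mem_Icc.mpr (abs_le.mp hx'.2)
      have he : E h x = h (Set.projIcc (-B) B hBle x) := Set.indicator_of_mem hx _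
      rw [he, Set.projIcc_of_mem hBle hxmem, hfx ⟨x, hxmem⟩, if_pos hx'.1]
    · have he : E h x = 0 := Set.indicator_of_notMem hx _
      rw [he]
      by_cases hax : a < |x|
      · rw [if_pos hax]
        have hBx : B ≤ |x| := by
          by_contra hc
          push_neg at hc
          exact hx ⟨hax, hc.le⟩
        exact (hF0 _ (hsupp f) x hBx).symm
      · rw [if_neg hax]
  -- ## Compactness of Tac ∘ Ra
  have hcpt : IsCompactOperator ⇑(Tac.comp Ra) := by
    refine ⟨J '' closure A, hAA.image hJlip.continuous, ?_⟩
    apply Filter.mem_of_superset (Metric.closedBall_mem_nhds (0 : Lp ℂ 2 (piMeas π)) one_pos)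
    intro f hf
    rw [mem_closedBall_zero_iff] at hf
    set h : Set.Icc (-B) B →ᵇ ℂ :=
      BoundedContinuousFunction.mkOfCompact
        ⟨fun x : Set.Icc (-B) B => F (⇑(Ra f)) x.val,
          (hFcont f).comp continuous_subtype_val⟩ with hhdef
    have hhA : h ∈ A := ⟨f, hf, fun x => rfl⟩
    have : Tac.comp Ra f = J h := by
      rw [ContinuousLinearMap.comp_apply]
      exact (hJeq f h fun x => rfl).symm
    rw [Set.mem_preimage, this]
    exact Set.mem_image_of_mem J (subset_closure hhA)
  -- ## Algebra: reduce to Tac ∘ Ra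
  have hz : Rac.comp Ra = 0 := by
    apply ContinuousLinearMap.ext
    intro f
    rw [ContinuousLinearMap.comp_apply, ContinuousLinearMap.zero_apply]
    apply Lp.ext (μ := piMeas π)
    refine EventuallyEq.trans ?_ (Lp.coeFn_zero ℂ 2 (piMeas π)).symm
    filter_upwards [hRac (Ra f), hRa f] with x hx1 hx2
    rw [hx1]
    by_cases hax : a < |x|
    · rw [if_pos hax, hx2, if_neg (not_le.mpr hax), mul_zero]
      simp
    · rw [if_neg hax]
      simp
  obtain ⟨k, rfl⟩ : ∃ k, n = k + 1 := ⟨n - 1, (Nat.succ_pred_eq_of_pos hn).symm⟩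
  have halg : ((Rac + Tac) ^ (k + 1)).comp Ra = ((Rac + Tac) ^ k).comp (Tac.comp Ra) := by
    rw [pow_succ, ContinuousLinearMap.mul_def, ContinuousLinearMap.comp_assoc,
      ContinuousLinearMap.add_comp, hz, zero_add]
  rw [halg, ContinuousLinearMap.coe_comp']
  exact hcpt.continuous_comp ((Rac + Tac) ^ k).continuous
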